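/- Let D be a nonzero exponential-polynomial on ℝ of the form f(x) = Σ_{i=1}^m q_i(x) e^{λ_i x} with pairwise distinct λ_i ∈ ℂ and nonzero polynomials q_i. If f(x) → 0 as |x| → ∞ (x ∈ ℝ), then m = 0, i.e., f = 0. -/

import Mathlib

open scoped BigOperators
open Filter Polynomial

noncomputable section ExpPolyAux

private lemma norm_exp_term (c μ : ℂ) (x : ℝ) :
    ‖c * Complex.exp (μ * x)‖ = ‖c‖ * Real.exp (μ.re * x) := by
  rw [norm_mul, Complex.norm_exp]
  congr 2
  simp [Complex.mul_re]

private lemma single_not_tendsto (c μ : ℂ) (hc : c ≠ 0) :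
    ¬ Tendsto (fun x : ℝ => c * Complex.exp (μ * x)) (cocompact ℝ) (nhds 0) := by
  intro h
  rw [cocompact_eq_atBot_atTop, tendsto_sup] at h
  have hc' : (0:ℝ) < ‖c‖ := norm_pos_iff.mpr hc
  have hn2 : Tendsto (fun x : ℝ => ‖c * Complex.exp (μ * x)‖) atTop (nhds 0) := by
    simpa using h.2.norm
  have hn1 : Tendsto (fun x : ℝ => ‖c * Complex.exp (μ * x)‖) atBot (nhds 0) := by
    simpa using h.1.norm
  rcases le_or_gt 0 μ.re with hre | hre
  · have h1 := hn2.eventually_lt_const hc'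
    rcases (h1.and (eventually_ge_atTop (0:ℝ))).exists with ⟨x, hx1, hx2⟩
    rw [norm_exp_term] at hx1
    have he : (1:ℝ) ≤ Real.exp (μ.re * x) := Real.one_le_exp (mul_nonneg hre hx2)
    nlinarith
  · have h1 := hn1.eventually_lt_const hc'
    rcases (h1.and (eventually_le_atBot (0:ℝ))).exists with ⟨x, hx1, hx2⟩
    rw [norm_exp_term] at hx1
    have he : (1:ℝ) ≤ Real.exp (μ.re * x) :=
      Real.one_le_exp (by nlinarith)
    nlinarith

private lemma shift_tendsto (t : ℝ) {f : ℝ → ℂ}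
    (h : Tendsto f (cocompact ℝ) (nhds 0)) :
    Tendsto (fun x => f (x + t)) (cocompact ℝ) (nhds 0) := by
  rw [cocompact_eq_atBot_atTop, tendsto_sup] at h ⊢
  constructor
  · exact h.1.comp (tendsto_atBot_add_const_right _ t tendsto_id)
  · exact h.2.comp (tendsto_atTop_add_const_right _ t tendsto_id)

private lemma exists_good_t (s : Finset ℂ) :
    ∃ t : ℝ, t ≠ 0 ∧ ∀ μ ∈ s, ∀ ν ∈ s, μ ≠ ν →
      Complex.exp (μ * t) ≠ Complex.exp (ν * t) := by
  classical
  have key : ∀ μ ν : ℂ, Set.Countable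
      {x : ℝ | μ ≠ ν ∧ Complex.exp (μ * x) = Complex.exp (ν * x)} := by
    intro μ ν
    by_cases hμν : μ = ν
    · convert Set.countable_empty
      ext x; simp [hμν]
    · have hd : μ - ν ≠ 0 := sub_ne_zero.mpr hμν
      have hsub : {x : ℝ | μ ≠ ν ∧ Complex.exp (μ * x) = Complex.exp (ν * x)} ⊆
          ⋃ n : ℤ, {x : ℝ | (x:ℂ) = n * (2 * Real.pi * Complex.I) / (μ - ν)} := by
        rintro x ⟨-, hx⟩
        rw [Complex.exp_eq_exp_iff_exp_sub_eq_one, Complex.exp_eq_one_iff] at hx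
        obtain ⟨n, hn⟩ := hx
        refine Set.mem_iUnion.2 ⟨n, ?_⟩
        show (x:ℂ) = n * (2 * Real.pi * Complex.I) / (μ - ν)
        rw [eq_div_iff hd]
        linear_combination hn
      refine Set.Countable.mono hsub (Set.countable_iUnion fun n => ?_)
      apply Set.Subsingleton.countable
      intro a ha b hb
      have : (a:ℂ) = (b:ℂ) := by
        rw [Set.mem_setOf_eq] at ha hb
        rw [ha, hb]
      exact_mod_cast this
  have hB : Set.Countable ({(0:ℝ)} ∪
      ⋃ μ ∈ s, ⋃ ν ∈ s, {x : ℝ | μ ≠ ν ∧ Complex.exp (μ * x) = Complex.exp (ν * x)}) := by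
    refine (Set.countable_singleton 0).union ?_
    exact Set.Countable.biUnion s.countable_toSet fun μ _ =>
      Set.Countable.biUnion s.countable_toSet fun ν _ => key μ ν
  obtain ⟨t, ht⟩ : ∃ t : ℝ, t ∉ ({(0:ℝ)} ∪
      ⋃ μ ∈ s, ⋃ ν ∈ s, {x : ℝ | μ ≠ ν ∧ Complex.exp (μ * x) = Complex.exp (ν * x)}) := by
    by_contra h
    push_neg at h
    have := Set.eq_univ_of_forall h
    rw [this] at hB
    exact (Cardinal.not_countable_real) hB
  simp only [Set.mem_union, Set.mem_singleton_iff, Set.mem_iUnion, Set.mem_setOf_eq,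
    not_or, not_exists] at ht
  refine ⟨t, ht.1, fun μ hμ ν hν hμν heq => ?_⟩
  exact ht.2 μ hμ ν hν ⟨hμν, heq⟩

private lemma taylor_sub_ne_zero {p : Polynomial ℂ} (hp : 1 ≤ p.natDegree)
    {t : ℂ} (ht : t ≠ 0) : Polynomial.taylor t p - p ≠ 0 := by
  intro h
  have hper : ∀ x : ℂ, p.eval (x + t) = p.eval x := by
    intro x
    have := congrArg (Polynomial.eval x) h
    rw [Polynomial.eval_sub, Polynomial.taylor_eval, Polynomial.eval_zero,
      sub_eq_zero] at this
    exact this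
  have hn : ∀ n : ℕ, p.eval ((n:ℂ) * t) = p.eval 0 := by
    intro n
    induction n with
    | zero => simp
    | succ k ih =>
      push_cast
      rw [add_mul, one_mul, hper, ih]
  have hroots : {x : ℂ | (p - Polynomial.C (p.eval 0)).IsRoot x}.Infinite := by
    refine Set.infinite_of_injective_forall_mem (f := fun n : ℕ => (n:ℂ) * t) ?_ ?_
    · intro a b hab
      have : (a:ℂ) = b := mul_right_cancel₀ ht hab
      exact_mod_cast this
    · intro n
      simp [Polynomial.IsRoot, hn n]
  have hzero := Polynomial.eq_zero_of_infinite_isRoot _ hroots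
  have hpC : p = Polynomial.C (p.eval 0) := by
    rwa [sub_eq_zero] at hzero
  rw [hpC] at hp
  simp at hp

private lemma taylor_leadingCoeff (t : ℂ) (p : Polynomial ℂ) :
    (Polynomial.taylor t p).leadingCoeff = p.leadingCoeff := by
  rw [Polynomial.taylor_apply, Polynomial.leadingCoeff_comp (by simp),
    Polynomial.leadingCoeff_X_add_C, one_pow, mul_one]

private lemma key_step (s : Finset ℂ) (q : ℂ → Polynomial ℂ)
    (hq : ∀ μ ∈ s, q μ ≠ 0) (j : ℂ) (hj : j ∈ s)
    (hjs : 1 ≤ (q j).natDegree ∨ 2 ≤ s.card)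
    (hT : Tendsto (fun x : ℝ => ∑ μ ∈ s, (q μ).eval (x:ℂ) * Complex.exp (μ * x))
      (cocompact ℝ) (nhds 0)) :
    ∃ (s' : Finset ℂ) (q' : ℂ → Polynomial ℂ),
      (∀ μ ∈ s', q' μ ≠ 0) ∧ s'.Nonempty ∧
      (∑ μ ∈ s', ((q' μ).natDegree + 1)) < (∑ μ ∈ s, ((q μ).natDegree + 1)) ∧
      Tendsto (fun x : ℝ => ∑ μ ∈ s', (q' μ).eval (x:ℂ) * Complex.exp (μ * x))
        (cocompact ℝ) (nhds 0) := by
  classical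
  obtain ⟨t, ht0, htdist⟩ := exists_good_t s
  set a : ℂ → ℂ := fun μ => Complex.exp (μ * t) with ha
  set r : ℂ → Polynomial ℂ := fun μ =>
    Polynomial.C (a μ) * Polynomial.taylor (t:ℂ) (q μ) - Polynomial.C (a j) * q μ with hr
  -- the new sum tends to 0
  have hsum : (fun x : ℝ => ∑ μ ∈ s, (r μ).eval (x:ℂ) * Complex.exp (μ * x)) =
      (fun x : ℝ => (∑ μ ∈ s, (q μ).eval ((x + t : ℝ):ℂ) * Complex.exp (μ * ((x + t : ℝ):ℂ)))
        - a j * ∑ μ ∈ s, (q μ).eval (x:ℂ) * Complex.exp (μ * x)) := by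
    funext x
    rw [Finset.mul_sum, ← Finset.sum_sub_distrib]
    refine Finset.sum_congr rfl fun μ _ => ?_
    simp only [hr, Polynomial.eval_sub, Polynomial.eval_mul, Polynomial.eval_C,
      Polynomial.taylor_eval]
    push_cast
    rw [mul_add μ, Complex.exp_add]
    ring
  have hT' : Tendsto (fun x : ℝ => ∑ μ ∈ s, (r μ).eval (x:ℂ) * Complex.exp (μ * x))
      (cocompact ℝ) (nhds 0) := by
    rw [hsum]
    have := (shift_tendsto t hT).sub (hT.const_mul (a j))
    simpa using this
  -- properties of r
  have hrne : ∀ μ ∈ s, μ ≠ j → r μ ≠ 0 ∧ (r μ).natDegree = (q μ).natDegree := by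
    intro μ hμ hμj
    have haj : a μ ≠ a j := htdist μ hμ j hj hμj
    have hlc : (q μ).leadingCoeff ≠ 0 := Polynomial.leadingCoeff_ne_zero.mpr (hq μ hμ)
    set d := (q μ).natDegree with hd
    have hcoeff : (r μ).coeff d = (a μ - a j) * (q μ).leadingCoeff := by
      have h1 : (Polynomial.taylor (t:ℂ) (q μ)).coeff d =
          (q μ).leadingCoeff := by
        have hnd : (Polynomial.taylor (t:ℂ) (q μ)).natDegree = d :=
          Polynomial.natDegree_taylor (q μ) (t:ℂ)
        rw [← hnd, ← Polynomial.leadingCoeff, taylor_leadingCoeff]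
      simp only [hr, Polynomial.coeff_sub, Polynomial.coeff_C_mul, h1]
      rw [← Polynomial.leadingCoeff]
      ring
    have hc0 : (r μ).coeff d ≠ 0 := by
      rw [hcoeff]
      exact mul_ne_zero (sub_ne_zero.mpr haj) hlc
    have hrne : r μ ≠ 0 := fun h => hc0 (by simp [h])
    refine ⟨hrne, le_antisymm ?_ (Polynomial.le_natDegree_of_ne_zero hc0)⟩
    refine le_trans (Polynomial.natDegree_sub_le _ _) ?_
    simp only [max_le_iff]
    constructor
    · exact le_trans (Polynomial.natDegree_C_mul_le _ _)
        (le_of_eq (Polynomial.natDegree_taylor _ _))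
    · exact Polynomial.natDegree_C_mul_le _ _
  have hrj : r j = Polynomial.C (a j) *
      (Polynomial.taylor (t:ℂ) (q j) - q j) := by
    rw [hr, mul_sub]
  have hrjdeg : r j ≠ 0 → 1 ≤ (q j).natDegree ∧ (r j).natDegree < (q j).natDegree := by
    intro hne
    have hd1 : 1 ≤ (q j).natDegree := by
      by_contra h
      push_neg at h
      obtain ⟨c, hc⟩ := Polynomial.natDegree_eq_zero.mp (Nat.lt_one_iff.mp h)
      apply hne
      rw [hrj, ← hc, Polynomial.taylor_C, sub_self, mul_zero]
    refine ⟨hd1, ?_⟩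
    have hqne : q j ≠ 0 := hq j hj
    have htayne : Polynomial.taylor (t:ℂ) (q j) ≠ 0 := by
      rw [← Polynomial.leadingCoeff_ne_zero, taylor_leadingCoeff]
      exact Polynomial.leadingCoeff_ne_zero.mpr hqne
    have hdlt : (Polynomial.taylor (t:ℂ) (q j) - q j).degree < (q j).degree := by
      have hdeg : (Polynomial.taylor (t:ℂ) (q j)).degree = (q j).degree := by
        rw [Polynomial.degree_eq_natDegree htayne, Polynomial.degree_eq_natDegree hqne,
          Polynomial.natDegree_taylor]
      calc (Polynomial.taylor (t:ℂ) (q j) - q j).degree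
          < (Polynomial.taylor (t:ℂ) (q j)).degree :=
            Polynomial.degree_sub_lt hdeg htayne (taylor_leadingCoeff _ _)
        _ = (q j).degree := hdeg
    have hdiffne : Polynomial.taylor (t:ℂ) (q j) - q j ≠ 0 := by
      intro h
      apply hne
      rw [hrj, h, mul_zero]
    calc (r j).natDegree ≤ (Polynomial.taylor (t:ℂ) (q j) - q j).natDegree := by
          rw [hrj]; exact Polynomial.natDegree_C_mul_le _ _
      _ < (q j).natDegree := Polynomial.natDegree_lt_natDegree hdiffne hdlt
  refine ⟨s.filter (fun μ => r μ ≠ 0), r, ?_, ?_, ?_, ?_⟩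
  · intro μ hμ
    exact (Finset.mem_filter.mp hμ).2
  · -- nonempty
    rcases hjs with hdj | hcard
    · -- r j ≠ 0 since degree ≥ 1 and t ≠ 0
      refine ⟨j, Finset.mem_filter.mpr ⟨hj, ?_⟩⟩
      rw [hrj]
      refine mul_ne_zero (by simp [ha, Complex.exp_ne_zero]) ?_
      exact taylor_sub_ne_zero hdj (by exact_mod_cast ht0)
    · obtain ⟨k, hk, hkj⟩ := Finset.exists_mem_ne hcard j
      exact ⟨k, Finset.mem_filter.mpr ⟨hk, (hrne k hk hkj).1⟩⟩
  · -- measure decreases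
    set w : ℂ → ℕ := fun μ => if μ = j then (q j).natDegree else (q μ).natDegree + 1 with hw
    have h1 : (∑ μ ∈ s.filter (fun μ => r μ ≠ 0), ((r μ).natDegree + 1)) ≤
        ∑ μ ∈ s.filter (fun μ => r μ ≠ 0), w μ := by
      refine Finset.sum_le_sum fun μ hμ => ?_
      obtain ⟨hμs, hμr⟩ := Finset.mem_filter.mp hμ
      by_cases hμj : μ = j
      · subst hμj
        obtain ⟨h1, h2⟩ := hrjdeg hμr
        simp only [hw, if_pos rfl]
        omega
      · rw [hw]
        simp only [if_neg hμj, (hrne μ hμs hμj).2, le_refl]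
    have h2 : (∑ μ ∈ s.filter (fun μ => r μ ≠ 0), w μ) ≤ ∑ μ ∈ s, w μ :=
      Finset.sum_le_sum_of_subset (Finset.filter_subset _ _)
    have h3 : (∑ μ ∈ s, w μ) < ∑ μ ∈ s, ((q μ).natDegree + 1) := by
      refine Finset.sum_lt_sum (fun μ _ => ?_) ⟨j, hj, ?_⟩
      · rw [hw]
        by_cases hμj : μ = j
        · subst hμj; simp
        · simp [if_neg hμj]
      · simp [hw]
    omega
  · have heq : (fun x : ℝ => ∑ μ ∈ s.filter (fun μ => r μ ≠ 0),
        (r μ).eval (x:ℂ) * Complex.exp (μ * x)) =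
        (fun x : ℝ => ∑ μ ∈ s, (r μ).eval (x:ℂ) * Complex.exp (μ * x)) := by
      funext x
      refine Finset.sum_filter_of_ne fun μ hμ hf0 => ?_
      intro h0
      apply hf0
      rw [h0]
      simp
    rw [heq]
    exact hT'

private lemma key_lemma : ∀ (N : ℕ) (s : Finset ℂ) (q : ℂ → Polynomial ℂ),
    (∑ μ ∈ s, ((q μ).natDegree + 1)) ≤ N →
    (∀ μ ∈ s, q μ ≠ 0) → s.Nonempty →
    ¬ Tendsto (fun x : ℝ => ∑ μ ∈ s, (q μ).eval (x:ℂ) * Complex.exp (μ * x))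
      (cocompact ℝ) (nhds 0) := by
  intro N
  induction N using Nat.strong_induction_on with
  | _ N IH =>
    intro s q hdeg hq hne hT
    classical
    by_cases hbase : s.card = 1 ∧ ∀ μ ∈ s, (q μ).natDegree = 0
    · obtain ⟨μ, hμ⟩ := Finset.card_eq_one.mp hbase.1
      subst hμ
      obtain ⟨c, hc⟩ := Polynomial.natDegree_eq_zero.mp
        (hbase.2 μ (Finset.mem_singleton_self μ))
      have hc0 : c ≠ 0 := by
        intro h
        exact hq μ (Finset.mem_singleton_self μ) (by rw [← hc, h, map_zero])
      apply single_not_tendsto c μ hc0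
      have : (fun x : ℝ => c * Complex.exp (μ * x)) =
          (fun x : ℝ => ∑ ν ∈ ({μ} : Finset ℂ), (q ν).eval (x:ℂ) * Complex.exp (ν * x)) := by
        funext x
        rw [Finset.sum_singleton, ← hc, Polynomial.eval_C]
      rw [this]
      exact hT
    · -- find suitable j
      have hj' : ∃ j ∈ s, 1 ≤ (q j).natDegree ∨ 2 ≤ s.card := by
        by_cases hd : ∃ j ∈ s, 1 ≤ (q j).natDegree
        · obtain ⟨j, hj, hdj⟩ := hd
          exact ⟨j, hj, Or.inl hdj⟩
        · push_neg at hd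
          obtain ⟨j, hj⟩ := id hne
          refine ⟨j, hj, Or.inr ?_⟩
          rcases Nat.lt_or_ge s.card 2 with h | h
          · exfalso
            apply hbase
            have hcard1 : s.card = 1 := by
              have := Finset.card_pos.mpr hne
              omega
            exact ⟨hcard1, fun μ hμ => Nat.lt_one_iff.mp (hd μ hμ)⟩
          · exact h
      obtain ⟨j, hj, hjs⟩ := hj'
      obtain ⟨s', q', hq', hne', hlt, hT'⟩ := key_step s q hq j hj hjs hT
      exact IH (∑ μ ∈ s', ((q' μ).natDegree + 1)) (by omega) s' q' le_rfl hq' hne' hT'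

end ExpPolyAux

/-- An exponential polynomial `f(x) = Σ_{i=1}^m q_i(x) e^{λ_i x}` on `ℝ`, with pairwise
distinct `λ_i ∈ ℂ` and nonzero polynomials `q_i`, which tends to `0` as `|x| → ∞`,
must be the empty sum: `m = 0`. -/
theorem exp_polynomial_tendsto_zero_on_line
    (m : ℕ) (q : Fin m → Polynomial ℂ) (hq : ∀ i, q i ≠ 0)
    (lam : Fin m → ℂ) (hlam : Function.Injective lam)
    (f : ℝ → ℂ)
    (hf : ∀ x : ℝ, f x = ∑ i, (q i).eval (x : ℂ) * Complex.exp (lam i * (x : ℂ)))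
    (hlim : Filter.Tendsto f (Filter.cocompact ℝ) (nhds 0)) :
    m = 0 := by
  by_contra hm
  have hm' : 0 < m := Nat.pos_of_ne_zero hm
  classical
  set s : Finset ℂ := Finset.univ.image lam with hs
  set Q : ℂ → Polynomial ℂ := fun μ => if h : ∃ i, lam i = μ then q h.choose else 0 with hQdef
  have hQ : ∀ i, Q (lam i) = q i := by
    intro i
    have h : ∃ i', lam i' = lam i := ⟨i, rfl⟩
    simp only [hQdef, dif_pos h]
    congr 1
    exact hlam h.choose_spec
  have hsne : s.Nonempty :=
    ⟨lam ⟨0, hm'⟩, Finset.mem_image_of_mem _ (Finset.mem_univ _)⟩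
  refine key_lemma (∑ μ ∈ s, ((Q μ).natDegree + 1)) s Q le_rfl ?_ hsne ?_
  · intro μ hμ
    obtain ⟨i, -, rfl⟩ := Finset.mem_image.mp hμ
    rw [hQ]
    exact hq i
  · have heq : (fun x : ℝ => ∑ μ ∈ s, (Q μ).eval (x:ℂ) * Complex.exp (μ * x)) = f := by
      funext x
      rw [hf x, hs, Finset.sum_image (fun a _ b _ h => hlam h)]
      exact Finset.sum_congr rfl fun i _ => by rw [hQ]
    rw [heq]
    exact hlim
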